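/- Let S = k[x_1,…,x_n] and S̃ = k[x_1,…,x_n,y_1,…,y_n] be polynomial rings over a field k. Let I ⊆ S̃ be a squarefree monomial ideal such that (a) no minimal monomial generator of I is divisible by x_i·y_i for any i, and (b) no associated prime of S̃/I contains both x_i and y_i for any i. Then for each i, the element x_i − y_i is a nonzerodivisor on S̃/I. -/

import Mathlib

open MvPolynomial

section Aux

variable {σ : Type*} [DecidableEq σ] {k : Type*} [Field k]

/-- Kill the variables in `T`, keep the others. -/
noncomputable def killT (T : Finset σ) : MvPolynomial σ k →ₐ[k] MvPolynomial σ k :=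
  aeval (fun j => if j ∈ T then 0 else X j)

lemma killT_X (T : Finset σ) (j : σ) :
    killT (k := k) T (X j) = if j ∈ T then 0 else X j := by
  rw [killT, aeval_X]

lemma killT_monomial (T : Finset σ) (m : σ →₀ ℕ) (a : k) :
    killT (k := k) T (monomial m a) =
      if ∀ j ∈ T, m j = 0 then monomial m a else 0 := by
  rw [killT, aeval_monomial]
  split_ifs with h
  · rw [monomial_eq, MvPolynomial.algebraMap_eq]
    congr 1
    apply Finsupp.prod_congr
    intro j hj
    rw [if_neg fun hjT => (Finsupp.mem_support_iff.mp hj) (h j hjT)]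
  · push_neg at h
    obtain ⟨j, hjT, hj⟩ := h
    rw [Finsupp.prod, Finset.prod_eq_zero (Finsupp.mem_support_iff.mpr hj), mul_zero]
    rw [if_pos hjT, zero_pow hj]

lemma coeff_killT (T : Finset σ) (m : σ →₀ ℕ) (hm : ∀ j ∈ T, m j = 0)
    (p : MvPolynomial σ k) : coeff m (killT (k := k) T p) = coeff m p := by
  induction p using MvPolynomial.induction_on' with
  | monomial μ a =>
    rw [killT_monomial]
    split_ifs with h
    · rfl
    · rw [coeff_zero, coeff_monomial]
      split_ifs with h2
      · subst h2; exact absurd hm h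
      · rfl
  | add p q hp hq => rw [map_add, coeff_add, coeff_add, hp, hq]

lemma killT_eq_zero_iff (T : Finset σ) (p : MvPolynomial σ k) :
    killT (k := k) T p = 0 ↔ p ∈ Ideal.span (X '' (T : Set σ)) := by
  constructor
  · intro h
    rw [mem_ideal_span_X_image]
    intro m hm
    by_contra hc
    push_neg at hc
    have h0 : coeff m p ≠ 0 := mem_support_iff.mp hm
    have := coeff_killT T m (fun j hj => hc j (Finset.mem_coe.mpr hj)) p
    rw [h, coeff_zero] at this
    exact h0 this.symm
  · intro h
    have hle : Ideal.span (X '' (T : Set σ)) ≤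
        RingHom.ker (killT (k := k) T : MvPolynomial σ k →+* MvPolynomial σ k) := by
      rw [Ideal.span_le]
      rintro _ ⟨j, hj, rfl⟩
      simp only [SetLike.mem_coe, RingHom.mem_ker, AlgHom.coe_toRingHom, killT, aeval_X]
      rw [if_pos (Finset.mem_coe.mp hj)]
    exact hle h

lemma killT_isPrime (T : Finset σ) :
    (Ideal.span (X '' (T : Set σ) : Set (MvPolynomial σ k))).IsPrime := by
  constructor
  · intro h
    have h1 : (1 : MvPolynomial σ k) ∈ Ideal.span (X '' (T : Set σ)) := h ▸ trivial
    rw [← killT_eq_zero_iff T 1] at h1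
    simp at h1
  · intro p q hpq
    rw [← killT_eq_zero_iff] at hpq ⊢
    rw [← killT_eq_zero_iff]
    rw [map_mul] at hpq
    exact mul_eq_zero.mp hpq

lemma prod_X_finset (s : Finset σ) :
    (∏ j ∈ s, X j : MvPolynomial σ k) = monomial (∑ j ∈ s, Finsupp.single j 1) 1 := by
  induction s using Finset.induction_on with
  | empty => simp
  | insert _ _ hj ih =>
    rw [Finset.prod_insert hj, Finset.sum_insert hj, ih,
      show (X _ : MvPolynomial σ k) = monomial (Finsupp.single _ 1) 1 from rfl,
      monomial_mul, one_mul]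

end Aux

/-- for a squarefree monomial ideal `I ⊆ k[x₁,…,xₙ,y₁,…,yₙ]` such that no
generator is divisible by `xᵢyᵢ` and no associated prime of `S̃/I` contains both `xᵢ`
and `yᵢ`, each `xᵢ − yᵢ` is a nonzerodivisor on `S̃/I`. -/
theorem sub_isSMulRegular_of_squarefree_monomial_ideal
    {k : Type*} [Field k] {n : ℕ}
    (G : Finset (Finset (Fin n ⊕ Fin n)))
    (I : Ideal (MvPolynomial (Fin n ⊕ Fin n) k))
    (hI : I = Ideal.span ((fun s : Finset (Fin n ⊕ Fin n) =>
      ∏ j ∈ s, (X j : MvPolynomial (Fin n ⊕ Fin n) k)) '' G))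
    (hgen : ∀ s ∈ G, ∀ i : Fin n, ¬ (Sum.inl i ∈ s ∧ Sum.inr i ∈ s))
    (hass : ∀ p ∈ associatedPrimes (MvPolynomial (Fin n ⊕ Fin n) k)
        (MvPolynomial (Fin n ⊕ Fin n) k ⧸ I),
      ∀ i : Fin n, ¬ ((X (Sum.inl i) : MvPolynomial (Fin n ⊕ Fin n) k) ∈ p ∧
        (X (Sum.inr i) : MvPolynomial (Fin n ⊕ Fin n) k) ∈ p)) :
    ∀ i : Fin n, ∀ z : MvPolynomial (Fin n ⊕ Fin n) k,
      (X (Sum.inl i) - X (Sum.inr i)) * z ∈ I → z ∈ I := by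
  classical
  intro i z hz
  -- `Tr T` : `T` is a transversal (vertex cover) of the generating sets.
  let Tr : Finset (Fin n ⊕ Fin n) → Prop := fun T => ∀ s ∈ G, ∃ j ∈ s, j ∈ T
  have gen_mem : ∀ s ∈ G, (∏ j ∈ s, X j : MvPolynomial (Fin n ⊕ Fin n) k) ∈ I :=
    fun s hs => hI ▸ Ideal.subset_span ⟨s, hs, rfl⟩
  have I_le : ∀ T : Finset (Fin n ⊕ Fin n), Tr T →
      I ≤ Ideal.span (X '' (T : Set (Fin n ⊕ Fin n))) := by
    intro T hT
    rw [hI, Ideal.span_le]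
    rintro _ ⟨s, hs, rfl⟩
    obtain ⟨j, hjs, hjT⟩ := hT s hs
    simp only [SetLike.mem_coe]
    rw [← Finset.mul_prod_erase s _ hjs]
    exact Ideal.mul_mem_right _ _ (Ideal.subset_span ⟨j, Finset.mem_coe.mpr hjT, rfl⟩)
  -- a minimal transversal gives an associated prime
  have assoc : ∀ T : Finset (Fin n ⊕ Fin n), Tr T → (∀ j ∈ T, ¬ Tr (T.erase j)) →
      Ideal.span (X '' (T : Set (Fin n ⊕ Fin n))) ∈
        associatedPrimes (MvPolynomial (Fin n ⊕ Fin n) k)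
          (MvPolynomial (Fin n ⊕ Fin n) k ⧸ I) := by
    intro T hT hmin
    refine ⟨killT_isPrime T, ⟨Ideal.Quotient.mk I (∏ j ∈ Tᶜ, X j), ?_⟩⟩
    rw [← (killT_isPrime T).radical]
    congr 1
    ext r
    rw [Submodule.mem_colon_singleton, Submodule.mem_bot]
    have hsm : r • Ideal.Quotient.mk I (∏ j ∈ Tᶜ, X j) =
        Ideal.Quotient.mk I (r * ∏ j ∈ Tᶜ, X j) := by
      rw [← Ideal.Quotient.mk_eq_mk, ← Ideal.Quotient.mk_eq_mk,
        ← Submodule.Quotient.mk_smul, smul_eq_mul]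
    rw [hsm, Ideal.Quotient.eq_zero_iff_mem]
    constructor
    · intro hr
      have hle : Ideal.span (X '' (T : Set (Fin n ⊕ Fin n))) ≤
          I.colon (Ideal.span {(∏ j ∈ Tᶜ, X j : MvPolynomial (Fin n ⊕ Fin n) k)}) := by
        rw [Ideal.span_le]
        rintro _ ⟨j, hjc, rfl⟩
        have hjT : j ∈ T := Finset.mem_coe.mp hjc
        rw [SetLike.mem_coe, Ideal.mem_colon_span_singleton]
        obtain ⟨s, hs, hnone⟩ : ∃ s ∈ G, ∀ l ∈ s, l ∉ T.erase j := by
          have h : ¬ ∀ s ∈ G, ∃ l ∈ s, l ∈ T.erase j := hmin j hjT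
          push_neg at h
          exact h
        have hsub : s ⊆ insert j Tᶜ := by
          intro l hl
          rcases eq_or_ne l j with rfl | hne
          · exact Finset.mem_insert_self _ _
          · exact Finset.mem_insert_of_mem (Finset.mem_compl.mpr fun hlT =>
              hnone l hl (Finset.mem_erase.mpr ⟨hne, hlT⟩))
        have hjc' : j ∉ Tᶜ := by simp [hjT]
        have heq : (X j : MvPolynomial (Fin n ⊕ Fin n) k) * ∏ l ∈ Tᶜ, X l =
            (∏ l ∈ insert j Tᶜ \ s, X l) * ∏ l ∈ s, X l := by
          rw [Finset.prod_sdiff hsub, Finset.prod_insert hjc']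
        rw [heq]
        exact Ideal.mul_mem_left _ _ (gen_mem s hs)
      exact Ideal.mem_colon_span_singleton.mp (hle hr)
    · intro hrf
      rw [← killT_eq_zero_iff]
      have h0 : killT (k := k) T (r * ∏ j ∈ Tᶜ, X j) = 0 :=
        (killT_eq_zero_iff T _).mpr (I_le T hT hrf)
      rw [map_mul] at h0
      have hf : killT (k := k) T (∏ j ∈ Tᶜ, X j) = ∏ j ∈ Tᶜ, X j := by
        rw [map_prod]
        exact Finset.prod_congr rfl fun j hj => by
          rw [killT_X, if_neg (Finset.mem_compl.mp hj)]
      have hfne : (∏ j ∈ Tᶜ, X j : MvPolynomial (Fin n ⊕ Fin n) k) ≠ 0 :=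
        Finset.prod_ne_zero_iff.mpr fun j _ => X_ne_zero j
      rw [hf] at h0
      exact (mul_eq_zero.mp h0).resolve_right hfne
  -- shrink any transversal to a minimal one
  have extract : ∀ N : ℕ, ∀ T : Finset (Fin n ⊕ Fin n), T.card ≤ N → Tr T →
      ∃ T', T' ⊆ T ∧ Tr T' ∧ ∀ j ∈ T', ¬ Tr (T'.erase j) := by
    intro N
    induction N with
    | zero =>
      intro T hc htr
      have hTe : T = ∅ := Finset.card_eq_zero.mp (Nat.le_zero.mp hc)
      subst hTe
      exact ⟨∅, subset_rfl, htr, fun j hj => absurd hj (Finset.notMem_empty j)⟩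
    | succ N ih =>
      intro T hc htr
      by_cases h : ∀ j ∈ T, ¬ Tr (T.erase j)
      · exact ⟨T, subset_rfl, htr, h⟩
      · push_neg at h
        obtain ⟨j, hjT, htr'⟩ := h
        obtain ⟨T', h1, h2, h3⟩ := ih (T.erase j)
          (by rw [Finset.card_erase_of_mem hjT]; omega) htr'
        exact ⟨T', h1.trans (Finset.erase_subset _ _), h2, h3⟩
  -- main claim: `z` lies in the prime of every minimal transversal
  have key : ∀ T : Finset (Fin n ⊕ Fin n), Tr T → (∀ j ∈ T, ¬ Tr (T.erase j)) →
      z ∈ Ideal.span (X '' (T : Set (Fin n ⊕ Fin n))) := by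
    intro T hT hmin
    have hp := killT_isPrime (k := k) T
    have hassT := hass _ (assoc T hT hmin) i
    have hxy : (X (Sum.inl i) - X (Sum.inr i) : MvPolynomial (Fin n ⊕ Fin n) k) ∉
        Ideal.span (X '' (T : Set (Fin n ⊕ Fin n))) := by
      intro hmem
      rw [← killT_eq_zero_iff, map_sub, killT_X, killT_X] at hmem
      by_cases h1 : Sum.inl i ∈ T <;> by_cases h2 : Sum.inr i ∈ T
      · exact hassT ⟨Ideal.subset_span ⟨_, Finset.mem_coe.mpr h1, rfl⟩,
          Ideal.subset_span ⟨_, Finset.mem_coe.mpr h2, rfl⟩⟩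
      · rw [if_pos h1, if_neg h2, zero_sub, neg_eq_zero] at hmem
        exact X_ne_zero _ hmem
      · rw [if_neg h1, if_pos h2, sub_zero] at hmem
        exact X_ne_zero _ hmem
      · rw [if_neg h1, if_neg h2, sub_eq_zero] at hmem
        exact (by simp : (Sum.inl i : Fin n ⊕ Fin n) ≠ Sum.inr i) (X_injective hmem)
    exact (hp.mem_or_mem (I_le T hT hz)).resolve_left hxy
  -- conclude
  by_cases hall : ∀ m ∈ z.support, ∃ s ∈ G, ∀ j ∈ s, m j ≠ 0
  · rw [MvPolynomial.as_sum z]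
    apply Ideal.sum_mem
    intro m hm
    obtain ⟨s, hs, hms⟩ := hall m hm
    have hd : (∑ j ∈ s, Finsupp.single j 1 : (Fin n ⊕ Fin n) →₀ ℕ) ≤ m := by
      rw [Finsupp.le_def]
      intro j
      rw [Finset.sum_apply']
      by_cases hj : j ∈ s
      · calc (∑ j' ∈ s, Finsupp.single j' 1 j) = 1 := by
              rw [Finset.sum_eq_single j (fun b _ hb => Finsupp.single_eq_of_ne' hb)
                (fun h => absurd hj h)]
              exact Finsupp.single_eq_same
          _ ≤ m j := Nat.one_le_iff_ne_zero.mpr (hms j hj)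
      · have : (∑ j' ∈ s, Finsupp.single j' 1 j) = 0 :=
          Finset.sum_eq_zero fun b hb => Finsupp.single_eq_of_ne' (fun h => hj (h ▸ hb))
        omega
    have heq : (monomial m (coeff m z) : MvPolynomial (Fin n ⊕ Fin n) k) =
        (∏ j ∈ s, X j) * monomial (m - ∑ j ∈ s, Finsupp.single j 1) (coeff m z) := by
      rw [prod_X_finset, monomial_mul, one_mul, add_tsub_cancel_of_le hd]
    rw [heq]
    exact Ideal.mul_mem_right _ _ (gen_mem s hs)
  · exfalso
    push_neg at hall
    obtain ⟨m, hm, hbad⟩ := hall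
    have hTr : Tr (Finset.univ.filter (fun j => m j = 0)) := by
      intro s hs
      obtain ⟨j, hjs, hj0⟩ := hbad s hs
      exact ⟨j, hjs, Finset.mem_filter.mpr ⟨Finset.mem_univ _, hj0⟩⟩
    obtain ⟨T', hsub, hT', hmin⟩ := extract _ _ le_rfl hTr
    have hzT := key T' hT' hmin
    rw [mem_ideal_span_X_image] at hzT
    obtain ⟨j, hjT, hj⟩ := hzT m hm
    exact hj (Finset.mem_filter.mp (hsub (Finset.mem_coe.mp hjT))).2
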